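/- A 2-permutation σ is fully 2-rooted cuttable if and only if it avoids the pattern b·b′·c·a with a ≤ b, b′ ≤ c; that is, if and only if there exist no positions p1 < p2 < p3 < p4 with σ(p4) ≤ σ(p1) ≤ σ(p3) and σ(p4) ≤ σ(p2) ≤ σ(p3). -/

import Mathlib

/-- `σ` is a `k`-permutation of degree `n`: a word over the alphabet `{1, …, n}`
in which every value `i ∈ {1, …, n}` occurs exactly `k` times (and no other
letter occurs). -/
def IsMultiPerm (k n : ℕ) (σ : List ℕ) : Prop :=
  ∀ i : ℕ, σ.count i = if 1 ≤ i ∧ i ≤ n then k else 0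

/-- The restriction `σ^{|L}` of a multipermutation `σ` to a set `L` of values:
delete all letters whose value is not in `L`, and replace, for each `x`, the
`x`-th smallest element of `L` by `x`. -/
def restrict (σ : List ℕ) (L : Finset ℕ) : List ℕ :=
  (σ.filter fun x => decide (x ∈ L)).map fun x => (L.filter fun y => y ≤ x).card

/-- `γ` is a `k`-rooted cut of the `k`-permutation `σ` of degree `n`:
`1 ≤ γ ≤ n - 1` and `σ = μ·ν·ω` where `μ` consists of the first `k` letters of
`σ` and `ν`, `ω` are words such that every letter of `ν` is at most `γ` and
every letter of `ω` is greater than `γ`. -/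
def IsKRootedCut (k n : ℕ) (σ : List ℕ) (γ : ℕ) : Prop :=
  1 ≤ γ ∧ γ ≤ n - 1 ∧
    ∃ μ ν ω : List ℕ,
      σ = μ ++ ν ++ ω ∧ μ.length = k ∧ (∀ x ∈ ν, x ≤ γ) ∧ (∀ x ∈ ω, γ < x)

/-- A `k`-permutation of degree `n` is `k`-rooted cuttable if it has a
`k`-rooted cut. -/
def KRootedCuttable (k n : ℕ) (σ : List ℕ) : Prop :=
  ∃ γ, IsKRootedCut k n σ γ

/-- A `k`-permutation of degree `n` is fully `k`-rooted cuttable if its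
restriction to every interval `{a, …, b} ⊆ {1, …, n}` with `a < b` is
`k`-rooted cuttable. -/
def FullyKRootedCuttable (k n : ℕ) (σ : List ℕ) : Prop :=
  ∀ a b : ℕ, 1 ≤ a → a < b → b ≤ n →
    KRootedCuttable k (Finset.Icc a b).card (restrict σ (Finset.Icc a b))

section Aux
lemma multiPerm_mem {k n : ℕ} {σ : List ℕ} (h : IsMultiPerm k n σ) {x : ℕ}
    (hx : x ∈ σ) : 1 ≤ x ∧ x ≤ n := by
  by_contra hc
  have h0 : σ.count x = 0 := by rw [h x, if_neg hc]
  have := List.count_pos_iff.mpr hx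
  omega

lemma split_of_no_pair (l : List ℕ) (γ : ℕ)
    (h : ∀ q r : ℕ, q < r → r < l.length → l.getD r 0 ≤ γ → γ < l.getD q 0 → False) :
    ∃ ν ω : List ℕ, l = ν ++ ω ∧ (∀ x ∈ ν, x ≤ γ) ∧ (∀ x ∈ ω, γ < x) := by
  induction l with
  | nil => exact ⟨[], [], rfl, by simp, by simp⟩
  | cons a t ih =>
    by_cases ha : a ≤ γ
    · obtain ⟨ν, ω, heq, hν, hω⟩ := ih (by
        intro q r hqr hr h1 h2
        exact h (q+1) (r+1) (by omega) (by simpa using Nat.succ_lt_succ hr)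
          (by simpa using h1) (by simpa using h2))
      exact ⟨a :: ν, ω, by simp [heq], by
        intro x hx; rcases List.mem_cons.mp hx with h' | h'
        · omega
        · exact hν x h', hω⟩
    · refine ⟨[], a :: t, rfl, by simp, ?_⟩
      intro x hx
      rcases List.mem_cons.mp hx with h' | h'
      · omega
      · by_contra hc
        obtain ⟨r, hr, hrx⟩ := List.mem_iff_getElem.mp h'
        refine h 0 (r+1) (by omega) (by simpa using Nat.succ_lt_succ hr) ?_ (by simpa using ha)
        rw [List.getD_eq_getElem _ _ (by simpa using Nat.succ_lt_succ hr)]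
        simpa [hrx] using by omega

lemma pair_of_uncut (m : ℕ) (τ : List ℕ) (hlen : 2 ≤ τ.length)
    (hun : ¬ KRootedCuttable 2 m τ) (γ : ℕ) (hγ1 : 1 ≤ γ) (hγ2 : γ ≤ m - 1) :
    ∃ q r : ℕ, q < r ∧ r < (τ.drop 2).length ∧
      (τ.drop 2).getD r 0 ≤ γ ∧ γ < (τ.drop 2).getD q 0 := by
  by_contra hc
  push_neg at hc
  obtain ⟨ν, ω, heq, hν, hω⟩ := split_of_no_pair (τ.drop 2) γ (by
    intro q r hqr hr h1 h2
    exact absurd (hc q r hqr hr h1) (by omega))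
  refine hun ⟨γ, hγ1, hγ2, τ.take 2, ν, ω, ?_, by simp [List.length_take]; omega, hν, hω⟩
  rw [List.append_assoc, ← heq, List.take_append_drop]

lemma cross_of_uncut (m : ℕ) (τ : List ℕ) (hlen : 2 ≤ τ.length)
    (hbound : ∀ x ∈ τ, 1 ≤ x ∧ x ≤ m)
    (hun : ¬ KRootedCuttable 2 m τ)
    (j : ℕ) (hj0 : 0 < j) (hjL : j < (τ.drop 2).length) :
    ∃ q r : ℕ, q < j ∧ j ≤ r ∧ r < (τ.drop 2).length ∧
      (τ.drop 2).getD r 0 ≤ (τ.drop 2).getD q 0 := by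
  set rest := τ.drop 2 with hrest
  by_contra hc
  push_neg at hc
  -- hc : ∀ q r, q < j → j ≤ r → r < rest.length → rest.getD q 0 < rest.getD r 0
  have hmem : ∀ i, i < rest.length → 1 ≤ rest.getD i 0 ∧ rest.getD i 0 ≤ m := by
    intro i hi
    rw [List.getD_eq_getElem _ _ hi]
    exact hbound _ (by
      have := List.getElem_mem (l := rest) (n := i) hi
      exact List.mem_of_mem_drop (by simpa [hrest] using this))
  obtain ⟨qs, hqsmem, hqsmax⟩ := Finset.exists_max_image (Finset.range j)
    (fun i => rest.getD i 0) ⟨0, Finset.mem_range.mpr hj0⟩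
  have hqsj : qs < j := Finset.mem_range.mp hqsmem
  set γ := rest.getD qs 0 with hγ
  have hγ1 : 1 ≤ γ := (hmem qs (lt_of_lt_of_le hqsj (le_of_lt hjL))).1
  have hγ2 : γ ≤ m - 1 := by
    have h1 := hc qs j hqsj le_rfl hjL
    have h2 := (hmem j hjL).2
    omega
  refine hun ⟨γ, hγ1, hγ2, τ.take 2, rest.take j, rest.drop j, ?_,
    by simp [List.length_take]; omega, ?_, ?_⟩
  · rw [List.append_assoc, List.take_append_drop, hrest, List.take_append_drop]
  · intro x hx
    obtain ⟨i, hi, hix⟩ := List.mem_iff_getElem.mp hx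
    have hij : i < j := by simp [List.length_take] at hi; omega
    have : x = rest.getD i 0 := by
      rw [List.getD_eq_getElem _ _ (by omega : i < rest.length), ← hix, List.getElem_take]
    rw [this]
    exact hqsmax i (Finset.mem_range.mpr hij)
  · intro x hx
    obtain ⟨i, hi, hix⟩ := List.mem_iff_getElem.mp hx
    have hiL : j + i < rest.length := by
      have := hi; simp [List.length_drop] at this; omega
    have : x = rest.getD (j + i) 0 := by
      rw [List.getD_eq_getElem _ _ hiL, ← hix, List.getElem_drop]
    rw [this]
    exact hc qs (j + i) hqsj (by omega) hiL

lemma key_core (m L : ℕ) (hm : 2 ≤ m) (u : ℕ → ℕ)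
    (humem : ∀ i, i < L + 2 → 1 ≤ u i ∧ u i ≤ m)
    (hpair : ∀ γ, 1 ≤ γ → γ ≤ m - 1 →
      ∃ q r : ℕ, q < r ∧ r < L ∧ u (r+2) ≤ γ ∧ γ < u (q+2))
    (hcross : ∀ j, 0 < j → j < L →
      ∃ q r : ℕ, q < j ∧ j ≤ r ∧ r < L ∧ u (r+2) ≤ u (q+2))
    (hav : ∀ i1 i2 i3 i4 : ℕ, i1 < i2 → i2 < i3 → i3 < i4 → i4 < L + 2 →
      u i4 ≤ u i1 → u i1 ≤ u i3 → u i4 ≤ u i2 → u i2 ≤ u i3 → False) : False := by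
  have hxb : 1 ≤ u 0 ∧ u 0 ≤ m := humem 0 (by omega)
  have hyb : 1 ≤ u 1 ∧ u 1 ≤ m := humem 1 (by omega)
  have hvmem : ∀ i, i < L → 1 ≤ u (i+2) ∧ u (i+2) ≤ m := fun i hi => humem (i+2) (by omega)
  obtain ⟨q₀, r₀, hq₀r₀, hr₀L, hvr₀, _⟩ := hpair 1 le_rfl (by omega)
  have hvr₀1 : u (r₀+2) = 1 := by have := (hvmem r₀ hr₀L).1; omega
  obtain ⟨q₁, r₁, hq₁r₁, hr₁L, _, hvq₁⟩ := hpair (m - 1) (by omega) le_rfl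
  have hq₁L : q₁ < L := by omega
  have hvq₁m : u (q₁+2) = m := by have := (hvmem q₁ hq₁L).2; omega
  -- R : last index (in "rest" coordinates) with value 1 ; Q : first with value m
  have hS1ne : ((Finset.range L).filter (fun i => u (i+2) = 1)).Nonempty :=
    ⟨r₀, by simp [Finset.mem_filter, Finset.mem_range, hr₀L, hvr₀1]⟩
  set R := ((Finset.range L).filter (fun i => u (i+2) = 1)).max' hS1ne with hR
  have hRmem := Finset.max'_mem _ hS1ne
  rw [Finset.mem_filter, Finset.mem_range] at hRmem
  have hRL : R < L := hRmem.1
  have hvR : u (R+2) = 1 := hRmem.2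
  have hRlast : ∀ p, p < L → u (p+2) = 1 → p ≤ R := by
    intro p hp hvp
    exact Finset.le_max' _ p (by simp [Finset.mem_filter, Finset.mem_range, hp, hvp])
  have hSmne : ((Finset.range L).filter (fun i => u (i+2) = m)).Nonempty :=
    ⟨q₁, by simp [Finset.mem_filter, Finset.mem_range, hq₁L, hvq₁m]⟩
  set Q := ((Finset.range L).filter (fun i => u (i+2) = m)).min' hSmne with hQ
  have hQmem := Finset.min'_mem _ hSmne
  rw [Finset.mem_filter, Finset.mem_range] at hQmem
  have hQL : Q < L := hQmem.1
  have hvQ : u (Q+2) = m := hQmem.2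
  have hQfirst : ∀ p, p < L → u (p+2) = m → Q ≤ p := by
    intro p hp hvp
    exact Finset.min'_le _ p (by simp [Finset.mem_filter, Finset.mem_range, hp, hvp])
  rcases lt_trichotomy Q R with hQR | hQR | hQR
  · exact hav 0 1 (Q+2) (R+2) (by omega) (by omega) (by omega) (by omega)
      (by omega) (by omega) (by omega) (by omega)
  · rw [hQR] at hvQ; omega
  · -- R < Q
    obtain ⟨q, r, hqQ, hQr, hrL, hvrq⟩ := hcross Q (by omega) hQL
    have hqL : q < L := by omega
    have hrQ : Q < r := by
      rcases eq_or_lt_of_le hQr with h | h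
      · exfalso
        have hvqm' : u (q+2) = m := by
          have := (hvmem q hqL).2; rw [← h] at hvrq; omega
        have := hQfirst q hqL hvqm'; omega
      · exact h
    have hvqm : u (q+2) ≤ m := (hvmem q hqL).2
    have hxw : u 0 < u (r+2) := by
      by_contra hc
      exact hav 0 (q+2) (Q+2) (r+2) (by omega) (by omega) (by omega) (by omega)
        (by omega) (by omega) (by omega) (by omega)
    have hyw : u 1 < u (r+2) := by
      by_contra hc
      exact hav 1 (q+2) (Q+2) (r+2) (by omega) (by omega) (by omega) (by omega)
        (by omega) (by omega) (by omega) (by omega)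
    have hall : ∀ p, p < Q → p ≠ q → u (p+2) < u (r+2) := by
      intro p hpQ hpq
      by_contra hc
      push_neg at hc
      have hpL : p < L := by omega
      have hvpm : u (p+2) ≤ m := (hvmem p hpL).2
      rcases lt_or_gt_of_ne hpq with h | h
      · exact hav (p+2) (q+2) (Q+2) (r+2) (by omega) (by omega) (by omega) (by omega)
          (by omega) (by omega) (by omega) (by omega)
      · exact hav (q+2) (p+2) (Q+2) (r+2) (by omega) (by omega) (by omega) (by omega)
          (by omega) (by omega) (by omega) (by omega)
    have hRq : R < q := by
      rcases lt_trichotomy q R with h | h | h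
      · exfalso
        have h1w : 1 < u (r+2) := by
          have := hall R hQR (by omega); omega
        exact hav 0 1 (q+2) (R+2) (by omega) (by omega) (by omega) (by omega)
          (by omega) (by omega) (by omega) (by omega)
      · exfalso; rw [h] at hvrq; omega
      · exact h
    have descent : ∀ q' : ℕ, q' < L → R < q' → ∀ w' : ℕ, w' ≤ u (q'+2) → u 0 < w' →
        u 1 < w' → (∀ p, p < q' → u (p+2) < w') → False := by
      intro q'
      induction q' using Nat.strong_induction_on with
      | _ q' ih =>
        intro hq'L hRq' w' hw'q' hxw' hyw' hall'
        obtain ⟨q₂, r₂, h1, h2, h3, h4⟩ := hcross q' (by omega) hq'L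
        have hq₂w : u (q₂+2) < w' := hall' q₂ h1
        have hq'r₂ : q' < r₂ := by
          rcases eq_or_lt_of_le h2 with h | h
          · exfalso; rw [← h] at h4; omega
          · exact h
        have hvq'm : u (q'+2) ≤ m := (hvmem q' hq'L).2
        have hxw₂ : u 0 < u (r₂+2) := by
          by_contra hc
          exact hav 0 (q₂+2) (q'+2) (r₂+2) (by omega) (by omega) (by omega) (by omega)
            (by omega) (by omega) (by omega) (by omega)
        have hyw₂ : u 1 < u (r₂+2) := by
          by_contra hc
          exact hav 1 (q₂+2) (q'+2) (r₂+2) (by omega) (by omega) (by omega) (by omega)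
            (by omega) (by omega) (by omega) (by omega)
        have hall₂ : ∀ p, p < q₂ → u (p+2) < u (r₂+2) := by
          intro p hp
          by_contra hc
          push_neg at hc
          have hpw' : u (p+2) < w' := hall' p (by omega)
          exact hav (p+2) (q₂+2) (q'+2) (r₂+2) (by omega) (by omega) (by omega) (by omega)
            (by omega) (by omega) (by omega) (by omega)
        have hRq₂ : R < q₂ := by
          rcases lt_trichotomy q₂ R with h | h | h
          · exfalso
            exact hav 0 1 (q₂+2) (R+2) (by omega) (by omega) (by omega) (by omega)
              (by omega) (by omega) (by omega) (by omega)
          · exfalso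
            have hvq₂1 : u (q₂+2) = 1 := by rw [h]; exact hvR
            have hvr₂1 : u (r₂+2) = 1 := by have := (hvmem r₂ h3).1; omega
            have := hRlast r₂ h3 hvr₂1
            omega
          · exact h
        exact ih q₂ h1 (by omega) hRq₂ (u (r₂+2)) h4 hxw₂ hyw₂ hall₂
    exact descent q hqL hRq (u (r+2)) hvrq hxw hyw
      (fun p hp => hall p (by omega) (by omega))

lemma drop_getD_eq (τ : List ℕ) (i : ℕ) (hi : i < (τ.drop 2).length) :
    (τ.drop 2).getD i 0 = τ.getD (i+2) 0 := by
  rw [List.getD_eq_getElem _ _ hi,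
    List.getD_eq_getElem _ _ (by rw [List.length_drop] at hi; omega), List.getElem_drop]
  congr 1
  omega

lemma key (m : ℕ) (hm : 2 ≤ m) (τ : List ℕ) (hτ : IsMultiPerm 2 m τ)
    (hav : ∀ i1 i2 i3 i4 : ℕ, i1 < i2 → i2 < i3 → i3 < i4 → i4 < τ.length →
      τ.getD i4 0 ≤ τ.getD i1 0 → τ.getD i1 0 ≤ τ.getD i3 0 →
      τ.getD i4 0 ≤ τ.getD i2 0 → τ.getD i2 0 ≤ τ.getD i3 0 → False) :
    KRootedCuttable 2 m τ := by
  by_contra hun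
  have hbound : ∀ x ∈ τ, 1 ≤ x ∧ x ≤ m := fun x hx => multiPerm_mem hτ hx
  have hlen : 2 ≤ τ.length := by
    have h1 := hτ 1
    rw [if_pos (by omega : 1 ≤ 1 ∧ 1 ≤ m)] at h1
    have : List.count 1 τ ≤ τ.length := List.count_le_length
    omega
  have hL : (τ.drop 2).length = τ.length - 2 := List.length_drop
  refine key_core m (τ.length - 2) hm (fun i => τ.getD i 0) ?_ ?_ ?_ ?_
  · intro i hi
    show 1 ≤ τ.getD i 0 ∧ τ.getD i 0 ≤ m
    rw [List.getD_eq_getElem _ _ (by omega)]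
    exact hbound _ (List.getElem_mem (by omega))
  · intro γ hγ1 hγ2
    obtain ⟨q, r, h1, h2, h3, h4⟩ := pair_of_uncut m τ hlen hun γ hγ1 hγ2
    rw [drop_getD_eq τ r h2] at h3
    rw [drop_getD_eq τ q (by omega)] at h4
    exact ⟨q, r, h1, by omega, h3, h4⟩
  · intro j hj0 hjL
    obtain ⟨q, r, h1, h2, h3, h4⟩ := cross_of_uncut m τ hlen hbound hun j hj0 (by omega)
    rw [drop_getD_eq τ r h3, drop_getD_eq τ q (by omega)] at h4
    exact ⟨q, r, h1, h2, by omega, h4⟩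
  · intro i1 i2 i3 i4 a b c d e f g h
    exact hav i1 i2 i3 i4 a b c (by omega) e f g h

lemma f_eq (a b x : ℕ) (hax : a ≤ x) (hxb : x ≤ b) :
    ((Finset.Icc a b).filter fun y => y ≤ x).card = x + 1 - a := by
  have h : (Finset.Icc a b).filter (fun y => y ≤ x) = Finset.Icc a x := by
    ext z
    simp only [Finset.mem_filter, Finset.mem_Icc]
    omega
  rw [h, Nat.card_Icc]

lemma restrict_multiPerm {n : ℕ} {σ : List ℕ} (hσ : IsMultiPerm 2 n σ)
    {a b : ℕ} (h1a : 1 ≤ a) (hab : a ≤ b) (hbn : b ≤ n) :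
    IsMultiPerm 2 (b + 1 - a) (restrict σ (Finset.Icc a b)) := by
  intro i
  unfold restrict
  rw [List.count_eq_countP, List.countP_map]
  by_cases hi : 1 ≤ i ∧ i ≤ b + 1 - a
  · rw [if_pos hi]
    have hu : a ≤ a + i - 1 ∧ a + i - 1 ≤ b := by omega
    have hcong : List.countP
        ((fun x => x == i) ∘ fun x => ((Finset.Icc a b).filter fun y => y ≤ x).card)
        (σ.filter fun x => decide (x ∈ Finset.Icc a b))
        = List.countP (fun x => x == a + i - 1) (σ.filter fun x => decide (x ∈ Finset.Icc a b)) := by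
      apply List.countP_congr
      intro x hx
      have hxL : x ∈ Finset.Icc a b := by
        have := (List.mem_filter.mp hx).2
        simpa using this
      rw [Finset.mem_Icc] at hxL
      simp only [Function.comp_apply, beq_iff_eq, f_eq a b x hxL.1 hxL.2]
      omega
    rw [hcong, ← List.count_eq_countP,
      List.count_filter (by simp [Finset.mem_Icc]; omega)]
    rw [hσ (a + i - 1), if_pos (by omega)]
  · rw [if_neg hi]
    rw [List.countP_eq_zero]
    intro x hx
    have hxL : x ∈ Finset.Icc a b := by
      have := (List.mem_filter.mp hx).2
      simpa using this
    rw [Finset.mem_Icc] at hxL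
    simp only [Function.comp_apply, beq_iff_eq, f_eq a b x hxL.1 hxL.2]
    omega

lemma get_quad_sublist (σ : List ℕ) (p1 p2 p3 p4 : Fin σ.length)
    (h12 : p1 < p2) (h23 : p2 < p3) (h34 : p3 < p4) :
    List.Sublist [σ.get p1, σ.get p2, σ.get p3, σ.get p4] σ := by
  apply List.sublist_iff_exists_fin_orderEmbedding_get_eq.mpr
  refine ⟨OrderEmbedding.ofStrictMono
      (fun i => if (i : ℕ) = 0 then p1 else if (i : ℕ) = 1 then p2
        else if (i : ℕ) = 2 then p3 else p4) ?_, ?_⟩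
  · intro i j hij
    rcases i with ⟨iv, hiv⟩
    rcases j with ⟨jv, hjv⟩
    simp only [Fin.lt_def] at hij
    simp only [List.length_cons, List.length_nil] at hiv hjv
    have h13 : p1 < p3 := h12.trans h23
    have h14 : p1 < p4 := h13.trans h34
    have h24 : p2 < p4 := h23.trans h34
    interval_cases iv <;> interval_cases jv <;> simp_all
  · intro ix
    rcases ix with ⟨iv, hiv⟩
    simp only [List.length_cons, List.length_nil] at hiv
    interval_cases iv <;> rfl

end Aux

/-- A `2`-permutation is fully `2`-rooted cuttable if and only if it avoids the
pattern `b·b'·c·a` with `a ≤ b, b' ≤ c`, i.e. there are no positions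
`p₁ < p₂ < p₃ < p₄` with `σ(p₄) ≤ σ(p₁) ≤ σ(p₃)` and `σ(p₄) ≤ σ(p₂) ≤ σ(p₃)`. -/
theorem fullyTwoRootedCuttable_iff_avoids (n : ℕ) (hn : 1 ≤ n)
    (σ : List ℕ) (hσ : IsMultiPerm 2 n σ) :
    FullyKRootedCuttable 2 n σ ↔
      ¬ ∃ p₁ p₂ p₃ p₄ : Fin σ.length, p₁ < p₂ ∧ p₂ < p₃ ∧ p₃ < p₄ ∧
          σ.get p₄ ≤ σ.get p₁ ∧ σ.get p₁ ≤ σ.get p₃ ∧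
          σ.get p₄ ≤ σ.get p₂ ∧ σ.get p₂ ≤ σ.get p₃ := by
  constructor
  · -- fully cuttable → avoids
    intro hfull
    rintro ⟨p1, p2, p3, p4, h12, h23, h34, hb1, hc1, hb2, hc2⟩
    have hvb : ∀ p : Fin σ.length, 1 ≤ σ.get p ∧ σ.get p ≤ n :=
      fun p => multiPerm_mem hσ (σ.get_mem p)
    have hq := get_quad_sublist σ p1 p2 p3 p4 h12 h23 h34
    have hac : σ.get p4 < σ.get p3 := by
      by_contra hc
      have hz1 : σ.get p1 = σ.get p4 := by omega
      have hz2 : σ.get p2 = σ.get p4 := by omega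
      have hz3 : σ.get p3 = σ.get p4 := by omega
      rw [hz1, hz2, hz3] at hq
      have hcnt := hσ (σ.get p4)
      rw [if_pos ⟨(hvb p4).1, (hvb p4).2⟩] at hcnt
      have hcount := hq.count_le (σ.get p4)
      rw [hcnt] at hcount
      have h4 : List.count (σ.get p4) [σ.get p4, σ.get p4, σ.get p4, σ.get p4] = 4 := by
        rw [List.count_cons_self, List.count_cons_self, List.count_cons_self,
          List.count_cons_self, List.count_nil]
      omega
    obtain ⟨γ, hγ1, hγ2, μ, ν, ω, heq, hμ2, hν, hω⟩ :=
      hfull (σ.get p4) (σ.get p3) (hvb p4).1 hac (hvb p3).2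
    have hm : (Finset.Icc (σ.get p4) (σ.get p3)).card = σ.get p3 + 1 - σ.get p4 :=
      Nat.card_Icc _ _
    -- the four letters survive restriction
    have hfilter : List.filter (fun x => decide (x ∈ Finset.Icc (σ.get p4) (σ.get p3)))
        [σ.get p1, σ.get p2, σ.get p3, σ.get p4]
        = [σ.get p1, σ.get p2, σ.get p3, σ.get p4] := by
      rw [List.filter_eq_self]
      intro z hz
      simp only [List.mem_cons, List.not_mem_nil, or_false] at hz
      simp only [decide_eq_true_eq, Finset.mem_Icc]
      rcases hz with h | h | h | h <;> omega
    have hsub : List.Sublist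
        (List.map (fun x => ((Finset.Icc (σ.get p4) (σ.get p3)).filter fun y => y ≤ x).card)
          [σ.get p1, σ.get p2, σ.get p3, σ.get p4])
        (restrict σ (Finset.Icc (σ.get p4) (σ.get p3))) := by
      unfold restrict
      apply List.Sublist.map
      rw [← hfilter]
      exact hq.filter _
    set f : ℕ → ℕ := fun x => ((Finset.Icc (σ.get p4) (σ.get p3)).filter fun y => y ≤ x).card
      with hf
    have hfc : f (σ.get p3) = σ.get p3 + 1 - σ.get p4 := f_eq _ _ _ (le_of_lt hac) le_rfl
    have hfal : f (σ.get p4) = 1 := by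
      rw [hf]; simp only
      rw [f_eq _ _ _ le_rfl (le_of_lt hac)]
      omega
    rw [heq, List.append_assoc] at hsub
    simp only [List.map_cons, List.map_nil] at hsub
    obtain ⟨l₁, l₂, hl, hl1, hl2⟩ := List.sublist_append_iff.mp hsub
    have hk2 : l₁.length ≤ 2 := by
      have := hl1.length_le
      omega
    have hl₂eq : l₂ = List.drop l₁.length
        [f (σ.get p1), f (σ.get p2), f (σ.get p3), f (σ.get p4)] := by
      rw [hl, List.drop_left]
    have hdd : List.drop (2 - l₁.length) l₂ = [f (σ.get p3), f (σ.get p4)] := by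
      rw [hl₂eq, List.drop_drop]
      have h2 : l₁.length + (2 - l₁.length) = 2 := by omega
      rw [h2]
      rfl
    have hml : List.Sublist [f (σ.get p3), f (σ.get p4)] (ν ++ ω) :=
      (hdd ▸ List.drop_sublist _ _).trans hl2
    obtain ⟨w₁, w₂, hw, hw1, hw2⟩ := List.sublist_append_iff.mp hml
    cases w₁ with
    | nil =>
      have hmem : f (σ.get p4) ∈ ω := by
        apply List.Sublist.mem _ hw2
        rw [List.nil_append] at hw
        rw [← hw]
        simp
      have := hω _ hmem
      omega
    | cons hd tl =>
      have hhd : hd = f (σ.get p3) := by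
        rw [List.cons_append] at hw
        injection hw.symm
      have hmem : hd ∈ ν := List.Sublist.mem List.mem_cons_self hw1
      have := hν _ hmem
      rw [hhd, hfc] at this
      omega
  · -- avoids → fully cuttable
    intro hav a b h1a hab hbn
    have hm2 : 2 ≤ (Finset.Icc a b).card := by rw [Nat.card_Icc]; omega
    have hmp : IsMultiPerm 2 ((Finset.Icc a b).card) (restrict σ (Finset.Icc a b)) := by
      rw [Nat.card_Icc]
      exact restrict_multiPerm hσ h1a (le_of_lt hab) hbn
    apply key _ hm2 _ hmp
    intro i1 i2 i3 i4 h12 h23 h34 h4len e1 e2 e3 e4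
    have hlen : (restrict σ (Finset.Icc a b)).length
        = (σ.filter fun x => decide (x ∈ Finset.Icc a b)).length := by
      simp [restrict]
    obtain ⟨g, hg⟩ := List.sublist_iff_exists_fin_orderEmbedding_get_eq.mp
      (List.filter_sublist (p := fun x => decide (x ∈ Finset.Icc a b)) : (σ.filter _).Sublist σ)
    rw [hlen] at h4len
    have hFmem : ∀ (i : ℕ) (hi : i < (σ.filter fun x => decide (x ∈ Finset.Icc a b)).length),
        a ≤ (σ.filter fun x => decide (x ∈ Finset.Icc a b)).get ⟨i, hi⟩ ∧
        (σ.filter fun x => decide (x ∈ Finset.Icc a b)).get ⟨i, hi⟩ ≤ b := by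
      intro i hi
      have := List.get_mem (σ.filter fun x => decide (x ∈ Finset.Icc a b)) ⟨i, hi⟩
      have h2 := (List.mem_filter.mp this).2
      simp only [decide_eq_true_eq, Finset.mem_Icc] at h2
      exact h2
    have hτget : ∀ (i : ℕ) (hi : i < (σ.filter fun x => decide (x ∈ Finset.Icc a b)).length),
        (restrict σ (Finset.Icc a b)).getD i 0 =
          (σ.filter fun x => decide (x ∈ Finset.Icc a b)).get ⟨i, hi⟩ + 1 - a := by
      intro i hi
      rw [List.getD_eq_getElem _ _ (by rw [hlen]; exact hi)]
      unfold restrict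
      rw [List.getElem_map]
      exact f_eq a b _ (hFmem i hi).1 (hFmem i hi).2
    have hi1 : i1 < (σ.filter fun x => decide (x ∈ Finset.Icc a b)).length := by omega
    have hi2 : i2 < (σ.filter fun x => decide (x ∈ Finset.Icc a b)).length := by omega
    have hi3 : i3 < (σ.filter fun x => decide (x ∈ Finset.Icc a b)).length := by omega
    rw [hτget i1 hi1] at e1 e2
    rw [hτget i2 hi2] at e3 e4
    rw [hτget i3 hi3] at e2 e4
    rw [hτget i4 h4len] at e1 e3
    have hb1 := hFmem i1 hi1
    have hb2 := hFmem i2 hi2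
    have hb3 := hFmem i3 hi3
    have hb4 := hFmem i4 h4len
    refine hav ⟨g ⟨i1, hi1⟩, g ⟨i2, hi2⟩, g ⟨i3, hi3⟩, g ⟨i4, h4len⟩,
      g.strictMono (Fin.mk_lt_mk.mpr h12),
      g.strictMono (Fin.mk_lt_mk.mpr h23),
      g.strictMono (Fin.mk_lt_mk.mpr h34), ?_, ?_, ?_, ?_⟩ <;>
      rw [← hg, ← hg] <;> omega
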